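/- Let d, w > 0 with d·w > 1 and d < w. Then A(d,w,0) > A(w,d,0), where A(d,w,0) = d^w·(w+1)^(w+1)/(dw-1)^(w+1). Symmetrically, if d > w and dw > 1, then A(d,w,0) < A(w,d,0). -/

import Mathlib

open Real

/-- `log(1+t)/t` is decreasing: for `0 < u < v`, `u * log (1+v) < v * log (1+u)`. -/
lemma aux_log_ineq (u v : ℝ) (hu : 0 < u) (huv : u < v) :
    u * Real.log (1 + v) < v * Real.log (1 + u) := by
  have hv : 0 < v := hu.trans huv
  have hp : 1 < v / u := (one_lt_div hu).mpr huv
  have hb : 1 + (v / u) * u < (1 + u) ^ (v / u) :=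
    one_add_mul_self_lt_rpow_one_add (by linarith) (ne_of_gt hu) hp
  have h1 : 1 + (v / u) * u = 1 + v := by field_simp
  rw [h1] at hb
  have hlog : Real.log (1 + v) < Real.log ((1 + u) ^ (v / u)) :=
    Real.log_lt_log (by linarith) hb
  rw [Real.log_rpow (by linarith)] at hlog
  calc u * Real.log (1 + v) < u * (v / u * Real.log (1 + u)) := by
        exact mul_lt_mul_of_pos_left hlog hu
    _ = v * Real.log (1 + u) := by field_simp

/-- Key log-level inequality. -/
lemma aux_key (d w : ℝ) (hd : 0 < d) (hdw : 1 < d * w) (hlt : d < w) :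
    d * Real.log w + (d + 1) * Real.log (d + 1) - (d + 1) * Real.log (d * w - 1)
      < w * Real.log d + (w + 1) * Real.log (w + 1) - (w + 1) * Real.log (d * w - 1) := by
  have hw : 0 < w := hd.trans hlt
  set s : ℝ := d * w - 1 with hs_def
  have hs : 0 < s := by simp [hs_def]; linarith
  set u : ℝ := (d + 1) / s with hu_def
  set v : ℝ := (w + 1) / s with hv_def
  have hu : 0 < u := div_pos (by linarith) hs
  have hv : 0 < v := div_pos (by linarith) hs
  have huv : u < v := by
    rw [hu_def, hv_def]
    gcongr
  -- relations
  have e5 : 1 + u = d * v := by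
    rw [hu_def, hv_def]; field_simp; ring_nf; linarith [hs_def]
  have e6 : 1 + v = w * u := by
    rw [hu_def, hv_def]; field_simp; ring_nf; linarith [hs_def]
  -- log identities
  have hune : u ≠ 0 := ne_of_gt hu
  have hvne : v ≠ 0 := ne_of_gt hv
  have e1 : Real.log (1 + u) = Real.log d + Real.log v := by
    rw [e5, Real.log_mul (ne_of_gt hd) hvne]
  have e2 : Real.log (1 + v) = Real.log w + Real.log u := by
    rw [e6, Real.log_mul (ne_of_gt hw) hune]
  have e3 : Real.log u = Real.log (d + 1) - Real.log s := by
    rw [hu_def, Real.log_div (by linarith) (ne_of_gt hs)]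
  have e4 : Real.log v = Real.log (w + 1) - Real.log s := by
    rw [hv_def, Real.log_div (by linarith) (ne_of_gt hs)]
  -- the positive decomposition
  have t1 : u * Real.log (1 + v) < v * Real.log (1 + u) := aux_log_ineq u v hu huv
  have t2 : 0 < (v - u) * Real.log (1 + v) :=
    mul_pos (by linarith) (Real.log_pos (by linarith))
  have t3 : Real.log u < Real.log v := Real.log_lt_log hu huv
  -- G := log v - log u + w * log(1+u) - d * log(1+v) > 0
  have hG : 0 < Real.log v - Real.log u + w * Real.log (1 + u) - d * Real.log (1 + v) := by
    have hwu : w = (1 + v) / u := by rw [e6]; field_simp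
    have hdv : d = (1 + u) / v := by rw [e5]; field_simp
    rw [hwu, hdv]
    rw [div_mul_eq_mul_div, div_mul_eq_mul_div]
    have h1 : (1 + v) * Real.log (1 + u) / u - (1 + u) * Real.log (1 + v) / v
        = ((1 + v) * (v * Real.log (1 + u) - u * Real.log (1 + v))
            + (v - u) * (u * Real.log (1 + v))) / (u * v) := by
      field_simp; ring
    have h2 : 0 < (1 + v) * Real.log (1 + u) / u - (1 + u) * Real.log (1 + v) / v := by
      rw [h1]
      apply div_pos _ (mul_pos hu hv)
      have hl : 0 ≤ Real.log (1 + v) := Real.log_nonneg (by linarith)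
      nlinarith
    linarith
  -- substitute log identities into hG and conclude linearly
  rw [e1, e2, e3, e4] at hG
  have exp1 : w * (Real.log d + (Real.log (w + 1) - Real.log s))
      = w * Real.log d + w * Real.log (w + 1) - w * Real.log s := by ring
  have exp2 : d * (Real.log w + (Real.log (d + 1) - Real.log s))
      = d * Real.log w + d * Real.log (d + 1) - d * Real.log s := by ring
  rw [exp1, exp2] at hG
  linarith

/-- One direction of the comparison. -/
lemma aux_main (d w : ℝ) (hd : 0 < d) (hdw : 1 < d * w) (hlt : d < w) :
    w ^ d * (d + 1) ^ (d + 1) / (d * w - 1) ^ (d + 1)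
      < d ^ w * (w + 1) ^ (w + 1) / (d * w - 1) ^ (w + 1) := by
  have hw : 0 < w := hd.trans hlt
  have hs : 0 < d * w - 1 := by linarith
  have hL : 0 < w ^ d * (d + 1) ^ (d + 1) / (d * w - 1) ^ (d + 1) := by
    apply div_pos (mul_pos (Real.rpow_pos_of_pos hw d) (Real.rpow_pos_of_pos (by linarith) _))
      (Real.rpow_pos_of_pos hs _)
  have hR : 0 < d ^ w * (w + 1) ^ (w + 1) / (d * w - 1) ^ (w + 1) := by
    apply div_pos (mul_pos (Real.rpow_pos_of_pos hd w) (Real.rpow_pos_of_pos (by linarith) _))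
      (Real.rpow_pos_of_pos hs _)
  rw [← Real.log_lt_log_iff hL hR]
  rw [Real.log_div (by positivity) (by positivity), Real.log_div (by positivity) (by positivity),
    Real.log_mul (by positivity) (by positivity), Real.log_mul (by positivity) (by positivity),
    Real.log_rpow hw, Real.log_rpow hd, Real.log_rpow (by linarith : (0:ℝ) < d + 1),
    Real.log_rpow (by linarith : (0:ℝ) < w + 1), Real.log_rpow hs, Real.log_rpow hs]
  have := aux_key d w hd hdw hlt
  linarith

/-- Comparison of the threshold function `A(d,w,0) = d^w (w+1)^(w+1)/(dw-1)^(w+1)`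
with its swap `A(w,d,0)`: if `dw > 1` and `d < w` then `A(d,w,0) > A(w,d,0)`, and
symmetrically if `d > w` then `A(d,w,0) < A(w,d,0)`. -/
theorem stmt5 (d w : ℝ) (hd : 0 < d) (hw : 0 < w) (hdw : 1 < d * w) :
    (d < w → w ^ d * (d + 1) ^ (d + 1) / (d * w - 1) ^ (d + 1)
        < d ^ w * (w + 1) ^ (w + 1) / (d * w - 1) ^ (w + 1)) ∧
    (w < d → d ^ w * (w + 1) ^ (w + 1) / (d * w - 1) ^ (w + 1)
        < w ^ d * (d + 1) ^ (d + 1) / (d * w - 1) ^ (d + 1)) := by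
  constructor
  · intro h
    exact aux_main d w hd hdw h
  · intro h
    have := aux_main w d hw (by rwa [mul_comm]) h
    rwa [mul_comm w d] at this
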